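/- For every real ν with ν ∉ {−1/2, −1, −3/2, −2, ...}, both sequences y_k = Σ-representation coefficients c_k(ν) (defined, when convergent, as c_k(ν) = Σ_{n=0}^∞ a_n(ν) b_{n+k}(ν) (k+2n+ν+1/2)) and w_k = 2^(k+ν−1/2)/Γ(k+ν+1/2) satisfy the first-order recurrence (k+ν−1/2)·y_k − 2·y_{k−1} = 0; in particular, the sequence w_k satisfies (k+ν−1/2)·w_k = 2·w_{k−1} for all integers k. -/

import Mathlib

/-- Rising factorial (Pochhammer symbol) `(x)_n`. -/
def risingFac (x : ℝ) (n : ℕ) : ℝ := ∏ i ∈ Finset.range n, (x + i)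

/-- Falling factorial `⟨x⟩_n = x(x-1)⋯(x-n+1)`. -/
def fallingFac (x : ℝ) (n : ℕ) : ℝ := ∏ i ∈ Finset.range n, (x - i)

/-- Coefficient `a_n(ν)` from the asymptotic expansion of `K_ν`. -/
noncomputable def aCoef (ν : ℝ) (n : ℕ) : ℝ :=
  risingFac (ν + 1 / 2) n * fallingFac (ν - 1 / 2) n / ((n.factorial : ℝ) * 2 ^ n)

/-- Coefficient `b_j(ν)` from the ascending series of `I_ν`. -/
noncomputable def bCoef (ν : ℝ) (j : ℕ) : ℝ :=
  2 ^ j * risingFac (ν + 1 / 2) j / ((j.factorial : ℝ) * risingFac (2 * ν + 1) j)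

lemma risingFac_succ (x : ℝ) (n : ℕ) : risingFac x (n + 1) = risingFac x n * (x + n) :=
  Finset.prod_range_succ _ _

lemma fallingFac_succ (x : ℝ) (n : ℕ) : fallingFac x (n + 1) = fallingFac x n * (x - n) :=
  Finset.prod_range_succ _ _

lemma risingFac_ne_zero {x : ℝ} (h : ∀ i : ℕ, x + i ≠ 0) (n : ℕ) : risingFac x n ≠ 0 :=
  Finset.prod_ne_zero_iff.mpr fun i _ => h i

set_option maxHeartbeats 1000000 in
lemma key_term (ν : ℝ) (h2ν : ∀ m : ℕ, 2 * ν + 1 + m ≠ 0) (i n : ℕ) :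
    (((i : ℝ) + 1) + ν - 1 / 2) *
        (aCoef ν n * bCoef ν (n + (i + 1)) * (((i : ℝ) + 1) + 2 * n + ν + 1 / 2)) -
      2 * (aCoef ν n * bCoef ν (n + i) * ((i : ℝ) + 2 * n + ν + 1 / 2)) =
    2 * ((n : ℝ) + 1) * aCoef ν (n + 1) * bCoef ν ((n + 1) + i) -
      2 * (n : ℝ) * (aCoef ν n * bCoef ν (n + i)) := by
  have e1 : n + (i + 1) = (n + i) + 1 := by omega
  have e2 : (n + 1) + i = (n + i) + 1 := by omega
  rw [e1, e2]
  have hR3 : risingFac (2 * ν + 1) (n + i) ≠ 0 := risingFac_ne_zero h2ν _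
  have hlast : 2 * ν + 1 + ((n : ℝ) + (i : ℝ)) ≠ 0 := by
    have := h2ν (n + i); push_cast at this; exact this
  have hfn : ((n.factorial : ℝ)) ≠ 0 := Nat.cast_ne_zero.mpr n.factorial_ne_zero
  have hfni : (((n + i).factorial : ℝ)) ≠ 0 := Nat.cast_ne_zero.mpr (n + i).factorial_ne_zero
  have h2n : (2 : ℝ) ^ n ≠ 0 := pow_ne_zero _ two_ne_zero
  have h2ni : (2 : ℝ) ^ (n + i) ≠ 0 := pow_ne_zero _ two_ne_zero
  have hn1 : ((n : ℝ) + 1) ≠ 0 := by positivity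
  have hni1 : ((n : ℝ) + (i : ℝ) + 1) ≠ 0 := by positivity
  simp only [aCoef, bCoef, risingFac_succ, fallingFac_succ, Nat.factorial_succ, pow_succ,
    Nat.cast_mul, Nat.cast_add, Nat.cast_one]
  set A := risingFac (ν + 1 / 2) n with hA
  set B := fallingFac (ν - 1 / 2) n with hB
  set C := risingFac (ν + 1 / 2) (n + i) with hC
  set D := risingFac (2 * ν + 1) (n + i) with hD
  set p := ((n.factorial : ℝ)) with hp
  set q := (((n + i).factorial : ℝ)) with hq
  set t := ((2 : ℝ) ^ n) with ht
  set s := ((2 : ℝ) ^ (n + i)) with hs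
  set E := 2 * ν + 1 + ((n : ℝ) + (i : ℝ)) with hE
  field_simp
  ring

theorem recurrence_for_coefficients (ν : ℝ)
    (hν : ∀ j : ℕ, ν ≠ -((j : ℝ) + 1) / 2)
    (c : ℕ → ℝ)
    (hc : ∀ j : ℕ, Filter.Tendsto
      (fun N : ℕ => ∑ n ∈ Finset.range N,
        aCoef ν n * bCoef ν (n + j) * ((j : ℝ) + 2 * n + ν + 1 / 2))
      Filter.atTop (nhds (c j)))
    (w : ℤ → ℝ)
    (hw : ∀ k : ℤ, w k = (2 : ℝ) ^ ((k : ℝ) + ν - 1 / 2) / Real.Gamma ((k : ℝ) + ν + 1 / 2)) :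
    (∀ j : ℕ, 1 ≤ j → ((j : ℝ) + ν - 1 / 2) * c j - 2 * c (j - 1) = 0) ∧
    (∀ k : ℤ, ((k : ℝ) + ν - 1 / 2) * w k = 2 * w (k - 1)) := by
  have h2ν : ∀ m : ℕ, 2 * ν + 1 + m ≠ 0 := by
    intro m h
    exact hν m (by linarith)
  constructor
  · intro j hj
    obtain ⟨i, rfl⟩ : ∃ i, j = i + 1 := ⟨j - 1, (Nat.succ_pred_eq_of_pos hj).symm⟩
    simp only [Nat.add_sub_cancel]
    -- telescoping identity for partial sums
    have hS : ∀ N : ℕ,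
        (((i : ℝ) + 1) + ν - 1 / 2) * (∑ n ∈ Finset.range N,
            aCoef ν n * bCoef ν (n + (i + 1)) * (((i + 1 : ℕ) : ℝ) + 2 * n + ν + 1 / 2))
          - 2 * (∑ n ∈ Finset.range N,
            aCoef ν n * bCoef ν (n + i) * ((i : ℝ) + 2 * n + ν + 1 / 2))
          = 2 * (N : ℝ) * (aCoef ν N * bCoef ν (N + i)) := by
      intro N
      induction N with
      | zero => simp
      | succ N ih =>
        rw [Finset.sum_range_succ, Finset.sum_range_succ]
        have hk := key_term ν h2ν i N
        push_cast at hk ⊢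
        push_cast at ih
        nlinarith [hk, ih]
    -- the terms of the series with index i tend to 0
    have ht : Filter.Tendsto
        (fun N : ℕ => aCoef ν N * bCoef ν (N + i) * ((i : ℝ) + 2 * N + ν + 1 / 2))
        Filter.atTop (nhds 0) := by
      have h1 := ((hc i).comp (Filter.tendsto_add_atTop_nat 1)).sub (hc i)
      simp only [Function.comp, Finset.sum_range_succ, add_sub_cancel_left, sub_self] at h1
      exact h1
    -- hence a_N b_{N+i} tends to 0
    have ha : Filter.Tendsto (fun N : ℕ => aCoef ν N * bCoef ν (N + i))
        Filter.atTop (nhds 0) := by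
      refine squeeze_zero_norm' (a := fun N : ℕ =>
        ‖aCoef ν N * bCoef ν (N + i) * ((i : ℝ) + 2 * N + ν + 1 / 2)‖) ?_ ?_
      · filter_upwards [Filter.eventually_ge_atTop ⌈(1 : ℝ) - ((i : ℝ) + ν + 1 / 2)⌉₊] with N hN
        have hN' : (1 : ℝ) - ((i : ℝ) + ν + 1 / 2) ≤ (N : ℝ) := by
          exact_mod_cast le_trans (Nat.le_ceil _) (by exact_mod_cast hN)
        have hb : (1 : ℝ) ≤ (i : ℝ) + 2 * N + ν + 1 / 2 := by
          have : (0 : ℝ) ≤ (N : ℝ) := Nat.cast_nonneg _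
          linarith
        rw [norm_mul (aCoef ν N * bCoef ν (N + i))]
        have hcn : (1 : ℝ) ≤ ‖(i : ℝ) + 2 * N + ν + 1 / 2‖ := by
          rw [Real.norm_eq_abs, abs_of_pos (by linarith)]; exact hb
        nlinarith [norm_nonneg (aCoef ν N * bCoef ν (N + i))]
      · simpa using ht.norm
    -- the right-hand side of the telescoping identity tends to 0
    have hrhs : Filter.Tendsto (fun N : ℕ => 2 * (N : ℝ) * (aCoef ν N * bCoef ν (N + i)))
        Filter.atTop (nhds 0) := by
      have heq : ∀ N : ℕ, 2 * (N : ℝ) * (aCoef ν N * bCoef ν (N + i))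
          = aCoef ν N * bCoef ν (N + i) * ((i : ℝ) + 2 * N + ν + 1 / 2)
            - ((i : ℝ) + ν + 1 / 2) * (aCoef ν N * bCoef ν (N + i)) := by
        intro N; ring
      simp only [heq]
      simpa using ht.sub (ha.const_mul ((i : ℝ) + ν + 1 / 2))
    -- the left-hand side tends to the desired combination
    have hlhs : Filter.Tendsto
        (fun N : ℕ =>
          (((i : ℝ) + 1) + ν - 1 / 2) * (∑ n ∈ Finset.range N,
              aCoef ν n * bCoef ν (n + (i + 1)) * (((i + 1 : ℕ) : ℝ) + 2 * n + ν + 1 / 2))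
            - 2 * (∑ n ∈ Finset.range N,
              aCoef ν n * bCoef ν (n + i) * ((i : ℝ) + 2 * n + ν + 1 / 2)))
        Filter.atTop (nhds ((((i : ℝ) + 1) + ν - 1 / 2) * c (i + 1) - 2 * c i)) := by
      exact ((hc (i + 1)).const_mul _).sub ((hc i).const_mul 2)
    have := tendsto_nhds_unique (by simpa only [hS] using hlhs) hrhs
    push_cast
    push_cast at this
    linarith
  · intro k
    have hw1 := hw k
    have hw2 := hw (k - 1)
    have e1 : ((k - 1 : ℤ) : ℝ) + ν + 1 / 2 = (k : ℝ) + ν - 1 / 2 := by push_cast; ring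
    have e2 : ((k - 1 : ℤ) : ℝ) + ν - 1 / 2 = ((k : ℝ) + ν - 1 / 2) - 1 := by push_cast; ring
    rw [hw1, hw2, e1, e2]
    set z : ℝ := (k : ℝ) + ν - 1 / 2 with hz
    have hzz : (k : ℝ) + ν + 1 / 2 = z + 1 := by rw [hz]; ring
    rw [hzz]
    by_cases h0 : z = 0
    · simp [h0, Real.Gamma_zero]
    · rw [Real.Gamma_add_one h0]
      by_cases hG : Real.Gamma z = 0
      · simp [hG]
      · rw [show z - 1 = z + (-1) by ring, Real.rpow_add (by norm_num : (0:ℝ) < 2) z (-1),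
          Real.rpow_neg_one]
        field_simp
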